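/- (Hadamard convexity consequence) Let f be a transcendental entire function with maximum modulus M(r) = max_{|z|=r} |f(z)|. Then there exists a constant R₁ > 0 (depending on f) such that M(r^c) ≥ M(r)^c for all r ≥ R₁ and all c > 1. -/

import Mathlib

open Metric

set_option maxHeartbeats 1000000


-- helper: points on sphere bound
lemma abs_le_M (f : ℂ → ℂ) (hf : Differentiable ℂ f) (M : ℝ → ℝ)
    (hM : ∀ r : ℝ, M r = sSup ((fun z => ‖f z‖) '' sphere (0:ℂ) r))
    {r : ℝ} {z : ℂ} (hz : z ∈ sphere (0:ℂ) r) : ‖f z‖ ≤ M r := by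
  rw [hM]
  exact le_csSup (((isCompact_sphere (0:ℂ) r).image_of_continuousOn
    ((continuous_norm.comp hf.continuous).continuousOn)).bddAbove)
    ⟨z, hz, rfl⟩

lemma M_nonneg (f : ℂ → ℂ) (M : ℝ → ℝ)
    (hM : ∀ r : ℝ, M r = sSup ((fun z => ‖f z‖) '' sphere (0:ℂ) r))
    (r : ℝ) : 0 ≤ M r := by
  rw [hM]
  exact Real.sSup_nonneg (by rintro x ⟨z, _, rfl⟩; exact norm_nonneg _)

lemma growth (f : ℂ → ℂ) (hf : Differentiable ℂ f)
    (htrans : ∀ p : Polynomial ℂ, f ≠ fun z => p.eval z)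
    (M : ℝ → ℝ)
    (hM : ∀ r : ℝ, M r = sSup ((fun z => ‖f z‖) '' sphere (0:ℂ) r))
    (K : ℕ) : ∃ R : ℝ, 1 ≤ R ∧ ∀ r, R ≤ r → (r : ℝ) ^ K ≤ M r := by
  by_contra hcon
  push_neg at hcon
  set p := cauchyPowerSeries f 0 1 with hp_def
  have hp : HasFPowerSeriesOnBall f p 0 ⊤ := hf.hasFPowerSeriesOnBall 0 (R := 1) one_pos
  -- coefficient bound at any radius r > 0
  have key : ∀ n : ℕ, ∀ r : ℝ, 0 < r → ‖p.coeff n‖ ≤ M r * r⁻¹ ^ n := by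
    intro n r hr
    have hq : HasFPowerSeriesOnBall f (cauchyPowerSeries f 0 r.toNNReal) 0 ⊤ :=
      hf.hasFPowerSeriesOnBall 0 (R := r.toNNReal) (Real.toNNReal_pos.mpr hr)
    have hpq : p = cauchyPowerSeries f 0 r := by
      have := hp.hasFPowerSeriesAt.eq_formalMultilinearSeries hq.hasFPowerSeriesAt
      rwa [Real.coe_toNNReal _ hr.le] at this
    have h1 : ‖cauchyPowerSeries f 0 r n‖ ≤
        ((2 * Real.pi)⁻¹ * ∫ θ : ℝ in (0)..2 * Real.pi, ‖f (circleMap 0 r θ)‖) * |r|⁻¹ ^ n :=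
      norm_cauchyPowerSeries_le f 0 r n
    have hint : (∫ θ : ℝ in (0)..2 * Real.pi, ‖f (circleMap 0 r θ)‖) ≤ 2 * Real.pi * M r := by
      have : (∫ θ : ℝ in (0)..2 * Real.pi, ‖f (circleMap 0 r θ)‖) ≤
          ∫ _ : ℝ in (0)..2 * Real.pi, M r := by
        apply intervalIntegral.integral_mono_on Real.two_pi_pos.le
        · exact ((hf.continuous.comp (continuous_circleMap 0 r)).norm).intervalIntegrable 0 (2 * Real.pi)
        · exact intervalIntegrable_const
        · intro θ _
          exact abs_le_M f hf M hM (by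
            simp [mem_sphere_zero_iff_norm, norm_circleMap_zero, abs_of_pos hr])
      simpa [mul_comm] using this
    have hcoeff : ‖p.coeff n‖ ≤ ‖p n‖ :=
      calc ‖p.coeff n‖ = ‖p n 1‖ := rfl
        _ ≤ ‖p n‖ * ∏ _i : Fin n, ‖(1 : ℂ)‖ := (p n).le_opNorm 1
        _ = ‖p n‖ := by simp
    have h2 : ‖p n‖ ≤ M r * r⁻¹ ^ n := by
      rw [hpq]
      refine h1.trans ?_
      rw [abs_of_pos hr]
      apply mul_le_mul_of_nonneg_right _ (by positivity)
      calc (2 * Real.pi)⁻¹ * ∫ θ : ℝ in (0)..2 * Real.pi, ‖f (circleMap 0 r θ)‖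
          ≤ (2 * Real.pi)⁻¹ * (2 * Real.pi * M r) := by
            apply mul_le_mul_of_nonneg_left hint (by positivity)
        _ = M r := by field_simp
    exact hcoeff.trans h2
  -- coefficients above K vanish
  have hvanish : ∀ n : ℕ, K < n → p.coeff n = 0 := by
    intro n hn
    have hle : ∀ ε : ℝ, 0 < ε → ‖p.coeff n‖ ≤ ε := by
      intro ε hε
      obtain ⟨r, hrR, hrM⟩ := hcon (max 1 ε⁻¹) (le_max_left _ _)
      have hr1 : (1:ℝ) ≤ r := le_trans (le_max_left _ _) hrR
      have hr0 : (0:ℝ) < r := lt_of_lt_of_le one_pos hr1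
      have := key n r hr0
      have h3 : M r * r⁻¹ ^ n ≤ r ^ K * r⁻¹ ^ n := by
        apply mul_le_mul_of_nonneg_right hrM.le (by positivity)
      have h4 : r ^ K * r⁻¹ ^ n ≤ r⁻¹ := by
        have hpow : r ^ (K + 1) ≤ r ^ n := pow_le_pow_right₀ hr1 hn
        calc r ^ K * r⁻¹ ^ n ≤ r ^ K * r⁻¹ ^ (K + 1) := by
              apply mul_le_mul_of_nonneg_left _ (by positivity)
              rw [inv_pow, inv_pow]
              exact inv_anti₀ (by positivity) hpow
          _ = r⁻¹ := by rw [inv_pow, pow_succ]; field_simp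
      have h5 : r⁻¹ ≤ ε := by
        rw [inv_le_comm₀ hr0 hε]
        exact le_trans (le_max_right 1 ε⁻¹) hrR
      linarith
    by_contra hne
    have hpos : 0 < ‖p.coeff n‖ := norm_pos_iff.mpr hne
    linarith [hle (‖p.coeff n‖ / 2) (by linarith)]
  -- f is a polynomial: contradiction
  apply htrans (∑ n ∈ Finset.range (K + 1), Polynomial.C (p.coeff n) * Polynomial.X ^ n)
  funext y
  have hsum : HasSum (fun n : ℕ => y ^ n • p.coeff n) (f y) := by
    have := hp.hasSum (y := y) (by simp)
    simpa [FormalMultilinearSeries.apply_eq_pow_smul_coeff] using this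
  have hfin : HasSum (fun n : ℕ => y ^ n • p.coeff n)
      (∑ n ∈ Finset.range (K + 1), y ^ n • p.coeff n) := by
    apply hasSum_sum_of_ne_finset_zero
    intro n hn
    have hKn : K < n := by
      by_contra h
      exact hn (Finset.mem_range.mpr (by omega))
    rw [hvanish n hKn]
    simp
  rw [hsum.unique hfin, Polynomial.eval_finset_sum]
  refine Finset.sum_congr rfl fun i _ => ?_
  simp [smul_eq_mul]
  ring

lemma three_circles (f : ℂ → ℂ) (hf : Differentiable ℂ f) (M : ℝ → ℝ)
    (hM : ∀ r : ℝ, M r = sSup ((fun z => ‖f z‖) '' sphere (0:ℂ) r))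
    {A B t : ℝ} (hAB : A < B) (ht : t ∈ Set.Icc (0:ℝ) 1) :
    M (Real.exp (A + t * (B - A))) ≤
      M (Real.exp A) ^ (1 - t) * M (Real.exp B) ^ t := by
  set g : ℂ → ℂ := fun w => f (Complex.exp ((B - A : ℂ) * w + (A : ℂ))) with hg_def
  have hg : Differentiable ℂ g := by
    apply hf.comp
    apply Complex.differentiable_exp.comp
    exact (differentiable_const _|>.mul differentiable_id).add (differentiable_const _)
  have habs : ∀ w : ℂ, ‖Complex.exp ((B - A : ℂ) * w + (A : ℂ))‖
      = Real.exp ((B - A) * w.re + A) := by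
    intro w
    rw [Complex.norm_exp]
    congr 1
    simp [Complex.add_re, Complex.mul_re, Complex.ofReal_re, Complex.ofReal_im]
  -- boundedness on the closed strip
  have hBdd : BddAbove ((norm ∘ g) '' (Complex.HadamardThreeLines.verticalClosedStrip 0 1)) := by
    obtain ⟨C, hC⟩ := (isCompact_closedBall (0:ℂ) (Real.exp B)).exists_bound_of_continuousOn
      hf.continuous.continuousOn
    refine ⟨C, ?_⟩
    rintro x ⟨w, hw, rfl⟩
    apply hC
    rw [mem_closedBall_zero_iff, habs]
    apply Real.exp_le_exp.mpr
    have hw' : w.re ∈ Set.Icc (0:ℝ) 1 := hw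
    nlinarith [hw'.1, hw'.2]
  -- boundary bounds
  have ha : ∀ z ∈ Complex.re ⁻¹' {0}, ‖g z‖ ≤ M (Real.exp A) := by
    intro z hz
    apply abs_le_M f hf M hM
    rw [mem_sphere_zero_iff_norm, habs]
    simp only [Set.mem_preimage, Set.mem_singleton_iff] at hz
    rw [hz]; ring_nf
  have hb : ∀ z ∈ Complex.re ⁻¹' {1}, ‖g z‖ ≤ M (Real.exp B) := by
    intro z hz
    apply abs_le_M f hf M hM
    rw [mem_sphere_zero_iff_norm, habs]
    simp only [Set.mem_preimage, Set.mem_singleton_iff] at hz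
    rw [hz]; ring_nf
  -- apply three lines to each point of the sphere
  rw [hM]
  apply Real.sSup_le
  · rintro x ⟨z, hz, rfl⟩
    have hzabs : ‖z‖ = Real.exp (A + t * (B - A)) := by
      rwa [mem_sphere_zero_iff_norm] at hz
    set w : ℂ := (t : ℂ) + (Complex.arg z / (B - A) : ℝ) * Complex.I with hw_def
    have hwre : w.re = t := by
      rw [hw_def, Complex.add_re, Complex.ofReal_re, Complex.mul_re, Complex.ofReal_re,
        Complex.ofReal_im, Complex.I_re, Complex.I_im]
      ring
    have hgw : g w = f z := by
      have hBA : (B - A : ℝ) ≠ 0 := sub_ne_zero.mpr hAB.ne'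
      have hBA' : (B : ℂ) - (A : ℂ) ≠ 0 := by
        rw [← Complex.ofReal_sub, Complex.ofReal_ne_zero]
        exact hBA
      have harg : ((B - A : ℂ)) * w + (A : ℂ)
          = ((A + t * (B - A) : ℝ) : ℂ) + (Complex.arg z : ℝ) * Complex.I := by
        rw [hw_def]
        push_cast
        field_simp
        ring
      rw [hg_def]
      simp only
      rw [harg, Complex.exp_add, ← Complex.ofReal_exp, ← hzabs,
        Complex.norm_mul_exp_arg_mul_I]
    have h3 := Complex.HadamardThreeLines.norm_le_interp_of_mem_verticalClosedStrip₀₁' g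
      (z := w) (a := M (Real.exp A)) (b := M (Real.exp B))
      (by rw [Complex.HadamardThreeLines.verticalClosedStrip, Set.mem_preimage, hwre]; exact ht)
      hg.diffContOnCl hBdd ha hb
    rw [hgw, hwre] at h3
    exact h3
  · apply mul_nonneg <;> exact Real.rpow_nonneg (M_nonneg f M hM _) _

theorem hadamard_convexity_maximum_modulus
    (f : ℂ → ℂ) (hf : Differentiable ℂ f)
    (htrans : ∀ p : Polynomial ℂ, f ≠ fun z => p.eval z)
    (M : ℝ → ℝ)
    (hM : ∀ r : ℝ, M r = sSup ((fun z => ‖f z‖) '' sphere (0:ℂ) r)) :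
    ∃ R₁ : ℝ, 0 < R₁ ∧ ∀ r : ℝ, R₁ ≤ r → ∀ c : ℝ, 1 < c →
      M (r ^ c) ≥ (M r) ^ c := by
  -- anchor radius r₁ with M r₁ ≥ r₁ > 1
  obtain ⟨Ra, hRa1, hRa⟩ := growth f hf htrans M hM 1
  set r₁ : ℝ := max Ra 3 with hr₁_def
  have hr₁3 : (3:ℝ) ≤ r₁ := le_max_right _ _
  have hr₁1 : (1:ℝ) < r₁ := by linarith
  have hr₁0 : (0:ℝ) < r₁ := by linarith
  have hMr₁ : r₁ ≤ M r₁ := by simpa using hRa r₁ (le_max_left _ _)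
  have hMr₁pos : (0:ℝ) < M r₁ := lt_of_lt_of_le hr₁0 hMr₁
  set s₁ : ℝ := Real.log r₁ with hs₁_def
  have hs₁pos : 0 < s₁ := Real.log_pos hr₁1
  set u : ℝ := Real.log (M r₁) with hu_def
  set K : ℕ := ⌈u / s₁⌉₊ with hK_def
  obtain ⟨Rb, hRb1, hRb⟩ := growth f hf htrans M hM K
  refine ⟨max Rb (r₁ + 1), by positivity, ?_⟩
  intro r hr c hc
  have hrr₁ : r₁ + 1 ≤ r := le_trans (le_max_right _ _) hr
  have hrRb : Rb ≤ r := le_trans (le_max_left _ _) hr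
  have hr1 : (1:ℝ) < r := by linarith
  have hr0 : (0:ℝ) < r := by linarith
  set s : ℝ := Real.log r with hs_def
  have hss₁ : s₁ < s := Real.log_lt_log hr₁0 (by linarith)
  have hspos : 0 < s := lt_trans hs₁pos hss₁
  have hscs : s < c * s := by nlinarith
  -- positivity of the M values involved
  have hMr : r ^ K ≤ M r := hRb r hrRb
  have hMrpos : 0 < M r := lt_of_lt_of_le (by positivity) hMr
  have hrc_ge : r ≤ r ^ c := by
    calc r = r ^ (1:ℝ) := (Real.rpow_one r).symm
      _ ≤ r ^ c := Real.rpow_le_rpow_of_exponent_le hr1.le hc.le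
  have hMrc : (r ^ c) ^ K ≤ M (r ^ c) := hRb _ (le_trans hrRb hrc_ge)
  have hMrcpos : 0 < M (r ^ c) := lt_of_lt_of_le (by positivity) hMrc
  -- three circles with A = s₁, B = c*s
  set t : ℝ := (s - s₁) / (c * s - s₁) with ht_def
  have hden : 0 < c * s - s₁ := by linarith
  have ht0 : 0 ≤ t := div_nonneg (by linarith) hden.le
  have ht1 : t ≤ 1 := (div_le_one hden).mpr (by linarith)
  have hstep : s₁ + t * (c * s - s₁) = s := by
    rw [ht_def, div_mul_cancel₀ _ hden.ne']
    ring
  have h3c := three_circles f hf M hM (A := s₁) (B := c * s) (t := t)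
    (by linarith) ⟨ht0, ht1⟩
  rw [hstep] at h3c
  have hexps₁ : Real.exp s₁ = r₁ := Real.exp_log hr₁0
  have hexps : Real.exp s = r := Real.exp_log hr0
  have hexpcs : Real.exp (c * s) = r ^ c := by
    rw [Real.rpow_def_of_pos hr0, mul_comm]
  rw [hexps₁, hexps, hexpcs] at h3c
  -- take logs
  set v : ℝ := Real.log (M r) with hv_def
  set w : ℝ := Real.log (M (r ^ c)) with hw_def
  have hlog : v ≤ (1 - t) * u + t * w := by
    have := Real.log_le_log hMrpos h3c
    rwa [Real.log_mul (by positivity) (by positivity),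
      Real.log_rpow hMr₁pos, Real.log_rpow hMrcpos] at this
  -- v ≥ K * s ≥ (u/s₁) * s
  have hKv : (K : ℝ) * s ≤ v := by
    have h1 : Real.log (r ^ K) ≤ v := Real.log_le_log (by positivity) hMr
    rwa [Real.log_pow] at h1
  have hQ : u / s₁ ≤ (K : ℝ) := Nat.le_ceil _
  have hsv : s * u ≤ s₁ * v := by
    have h2 : (u / s₁) * s ≤ (K : ℝ) * s := mul_le_mul_of_nonneg_right hQ hspos.le
    have h3 : (u / s₁) * s ≤ v := le_trans h2 hKv
    calc s * u = ((u / s₁) * s) * s₁ := by field_simp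
      _ ≤ v * s₁ := mul_le_mul_of_nonneg_right h3 hs₁pos.le
      _ = s₁ * v := mul_comm _ _
  -- key convexity algebra: w ≥ c * v
  have hcv : c * v ≤ w := by
    have hD : (c * s - s₁) * v ≤ (c * s - s) * u + (s - s₁) * w := by
      have := mul_le_mul_of_nonneg_left hlog hden.le
      have e1 : (c * s - s₁) * ((1 - t) * u + t * w)
          = (c * s - s) * u + (s - s₁) * w := by
        rw [ht_def]
        field_simp
        ring
      linarith [e1 ▸ this]
    nlinarith [mul_le_mul_of_nonneg_left hsv (by linarith : (0:ℝ) ≤ c * s - s),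
      mul_pos hspos (sub_pos.mpr hss₁)]
  -- conclude
  have : (M r) ^ c ≤ M (r ^ c) := by
    calc (M r) ^ c = Real.exp (v * c) := by rw [Real.rpow_def_of_pos hMrpos]
      _ ≤ Real.exp w := Real.exp_le_exp.mpr (by nlinarith)
      _ = M (r ^ c) := Real.exp_log hMrcpos
  exact this
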